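/- Let [X,d,m] be a metric random walk space with reversible measure ν, Ω with ν(Ω_m) < ∞, and u : Ω_m → ℝ with u|_Ω ∈ L^{p-1}(Ω,ν) (p > 1) and ∫_{Q₂}|a_p(x,y,u(y)-u(x))| d(ν⊗m_x) < ∞, where a_p satisfies c|r|^{p-1} ≤ |a_p(x,y,r)|. Then m_{(·)}(Ω)|u|^{p-1} ∈ L^1(∂_mΩ, ν); that is, ∫_{∂_mΩ} m_x(Ω)|u(x)|^{p-1} dν(x) < +∞. -/

import Mathlib

open MeasureTheory ProbabilityTheory ENNReal

/-- The `m`-boundary of `Ω`. -/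
def mBoundary {X : Type*} [MeasurableSpace X] (κ : Kernel X X) (Ω : Set X) : Set X :=
  {x | x ∉ Ω ∧ 0 < κ x Ω}

/-- The `m`-closure of `Ω`. -/
def mClosure {X : Type*} [MeasurableSpace X] (κ : Kernel X X) (Ω : Set X) : Set X :=
  Ω ∪ mBoundary κ Ω

/-- `Q₂ = (Ω_m × Ω_m) \ (∂_mΩ × ∂_mΩ)`. -/
def Q2set {X : Type*} [MeasurableSpace X] (κ : Kernel X X) (Ω : Set X) : Set (X × X) :=
  ((mClosure κ Ω) ×ˢ (mClosure κ Ω)) \ ((mBoundary κ Ω) ×ˢ (mBoundary κ Ω))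

/-- If `u|_Ω ∈ L^{p-1}(Ω,ν)`, the kernel
`(x,y) ↦ a_p(x,y,u(y)-u(x))` is in `L¹(Q₂, ν ⊗ₘ κ)` and `c|r|^{p-1} ≤ |a_p(x,y,r)|`,
then `m_·(Ω)|u|^{p-1} ∈ L¹(∂_mΩ,ν)`, i.e.
`∫_{∂_mΩ} m_x(Ω) |u(x)|^{p-1} dν(x) < +∞`. -/
theorem boundary_weighted_integrability
    {X : Type*} [MeasurableSpace X]
    (κ : Kernel X X) [IsMarkovKernel κ]
    (ν : Measure X) [SigmaFinite ν]
    (habs : ∀ x, κ x ≪ ν)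
    (hrev : (ν ⊗ₘ κ).map Prod.swap = ν ⊗ₘ κ)
    (Ω : Set X) (hΩ : MeasurableSet Ω)
    (hfin : ν (mClosure κ Ω) < ⊤)
    (p c : ℝ) (hp : 1 < p) (hc : 0 < c)
    (a : X → X → ℝ → ℝ)
    (ham : Measurable (fun z : (X × X) × ℝ => a z.1.1 z.1.2 z.2))
    (hcoer : ∀ x y : X, ∀ r : ℝ, c * |r| ^ (p - 1) ≤ |a x y r|)
    (u : X → ℝ) (hum : Measurable u)
    (huL : ∫⁻ x in Ω, ENNReal.ofReal (|u x| ^ (p - 1)) ∂ν ≠ ⊤)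
    (hker : ∫⁻ z in Q2set κ Ω,
        ENNReal.ofReal |a z.1 z.2 (u z.2 - u z.1)| ∂(ν ⊗ₘ κ) ≠ ⊤) :
    ∫⁻ x in mBoundary κ Ω, κ x Ω * ENNReal.ofReal (|u x| ^ (p - 1)) ∂ν < ⊤ := by
  set q : ℝ := p - 1 with hq
  have hq0 : 0 < q := by simp [hq]; linarith
  set f : X → ℝ≥0∞ := fun x => ENNReal.ofReal (|u x| ^ q) with hf
  have hfmeas : Measurable f := by fun_prop
  have hbd : MeasurableSet (mBoundary κ Ω) := by
    have : mBoundary κ Ω = Ωᶜ ∩ {x | 0 < κ x Ω} := by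
      ext x; simp [mBoundary, Set.mem_setOf_eq]
    rw [this]
    exact hΩ.compl.inter (measurableSet_lt measurable_const (κ.measurable_coe hΩ))
  set C : ℝ≥0∞ := ENNReal.ofReal (2 ^ q) with hC
  have hCne : C ≠ ⊤ := ENNReal.ofReal_ne_top
  -- pointwise real inequality
  have hreal : ∀ x y : X, |u x| ^ q ≤ 2 ^ q * (|u y - u x| ^ q + |u y| ^ q) := by
    intro x y
    have h1 : |u x| ≤ |u y - u x| + |u y| := by
      have := abs_sub_abs_le_abs_sub (u x) (u y)
      have h2 := abs_sub_comm (u x) (u y)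
      calc |u x| ≤ |u x - u y| + |u y| := by
            have := abs_add_le (u x - u y) (u y); simpa using this
        _ = |u y - u x| + |u y| := by rw [abs_sub_comm]
    have h2 : |u x| ^ q ≤ (|u y - u x| + |u y|) ^ q :=
      Real.rpow_le_rpow (abs_nonneg _) h1 hq0.le
    refine h2.trans ?_
    have hmax : |u y - u x| + |u y| ≤ 2 * max (|u y - u x|) (|u y|) := by
      rw [two_mul]
      exact add_le_add (le_max_left _ _) (le_max_right _ _)
    have h3 : (|u y - u x| + |u y|) ^ q ≤ (2 * max (|u y - u x|) (|u y|)) ^ q :=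
      Real.rpow_le_rpow (by positivity) hmax hq0.le
    refine h3.trans ?_
    rw [Real.mul_rpow (by norm_num) (le_max_iff.2 (Or.inl (abs_nonneg _)))]
    gcongr 2 ^ q * ?_
    rcases max_cases (|u y - u x|) (|u y|) with ⟨h, _⟩ | ⟨h, _⟩ <;> rw [h]
    · nlinarith [Real.rpow_nonneg (abs_nonneg (u y)) q]
    · nlinarith [Real.rpow_nonneg (abs_nonneg (u y - u x)) q]
  have key : ∀ x y : X, f x ≤ C * (ENNReal.ofReal (|u y - u x| ^ q) + f y) := by
    intro x y
    have := hreal x y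
    calc f x ≤ ENNReal.ofReal (2 ^ q * (|u y - u x| ^ q + |u y| ^ q)) :=
          ENNReal.ofReal_le_ofReal this
      _ = C * (ENNReal.ofReal (|u y - u x| ^ q) + f y) := by
          rw [ENNReal.ofReal_mul (by positivity),
            ENNReal.ofReal_add (by positivity) (by positivity)]
  -- LHS equals an integral over ∂Ω ×ˢ Ω
  have hf1meas : Measurable (fun z : X × X => f z.1) := hfmeas.comp measurable_fst
  have hf2meas : Measurable (fun z : X × X => f z.2) := hfmeas.comp measurable_snd
  have hLHS : ∫⁻ x in mBoundary κ Ω, κ x Ω * f x ∂ν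
      = ∫⁻ z in (mBoundary κ Ω) ×ˢ Ω, f z.1 ∂(ν ⊗ₘ κ) := by
    rw [Measure.setLIntegral_compProd hf1meas hbd hΩ]
    simp only [setLIntegral_const]
    exact lintegral_congr fun x => mul_comm _ _
  have gmeas : Measurable (fun z : X × X => ENNReal.ofReal (|u z.2 - u z.1| ^ q)) := by
    fun_prop
  have hameas : Measurable (fun z : X × X => ENNReal.ofReal |a z.1 z.2 (u z.2 - u z.1)|) := by
    have h0 : Measurable (fun z : X × X => ((z.1, z.2), u z.2 - u z.1)) :=
      (measurable_fst.prodMk measurable_snd).prodMk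
        ((hum.comp measurable_snd).sub (hum.comp measurable_fst))
    exact ((ham.comp h0).abs).ennreal_ofReal
  -- Bound the first term via the coercivity and hker
  have hA : ∫⁻ z in (mBoundary κ Ω) ×ˢ Ω, ENNReal.ofReal (|u z.2 - u z.1| ^ q) ∂(ν ⊗ₘ κ) ≠ ⊤ := by
    have hsub : (mBoundary κ Ω) ×ˢ Ω ⊆ Q2set κ Ω := by
      rintro ⟨x, y⟩ ⟨hx, hy⟩
      refine ⟨⟨Or.inr hx, Or.inl hy⟩, fun h => h.2.1 hy⟩
    have hptw : ∀ z : X × X, ENNReal.ofReal (|u z.2 - u z.1| ^ q)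
        ≤ ENNReal.ofReal c⁻¹ * ENNReal.ofReal |a z.1 z.2 (u z.2 - u z.1)| := by
      intro z
      rw [← ENNReal.ofReal_mul (by positivity)]
      refine ENNReal.ofReal_le_ofReal ?_
      have h := hcoer z.1 z.2 (u z.2 - u z.1)
      rw [inv_mul_eq_div, le_div_iff₀ hc]
      linarith [h]
    refine ne_of_lt ?_
    calc ∫⁻ z in (mBoundary κ Ω) ×ˢ Ω, ENNReal.ofReal (|u z.2 - u z.1| ^ q) ∂(ν ⊗ₘ κ)
        ≤ ∫⁻ z in (mBoundary κ Ω) ×ˢ Ω,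
            ENNReal.ofReal c⁻¹ * ENNReal.ofReal |a z.1 z.2 (u z.2 - u z.1)| ∂(ν ⊗ₘ κ) :=
          lintegral_mono fun z => hptw z
      _ = ENNReal.ofReal c⁻¹ *
            ∫⁻ z in (mBoundary κ Ω) ×ˢ Ω, ENNReal.ofReal |a z.1 z.2 (u z.2 - u z.1)| ∂(ν ⊗ₘ κ) :=
          lintegral_const_mul _ hameas
      _ ≤ ENNReal.ofReal c⁻¹ *
            ∫⁻ z in Q2set κ Ω, ENNReal.ofReal |a z.1 z.2 (u z.2 - u z.1)| ∂(ν ⊗ₘ κ) := by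
          gcongr
      _ < ⊤ := ENNReal.mul_lt_top ENNReal.ofReal_lt_top hker.lt_top
  -- Bound the second term via reversibility and huL
  have hB : ∫⁻ z in (mBoundary κ Ω) ×ˢ Ω, f z.2 ∂(ν ⊗ₘ κ) ≠ ⊤ := by
    have hle : ∫⁻ z in (mBoundary κ Ω) ×ˢ Ω, f z.2 ∂(ν ⊗ₘ κ)
        ≤ ∫⁻ z in (Set.univ : Set X) ×ˢ Ω, f z.2 ∂(ν ⊗ₘ κ) :=
      lintegral_mono' (Measure.restrict_mono (Set.prod_mono (Set.subset_univ _) le_rfl) le_rfl)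
        (le_refl _)
    have hswap : ∫⁻ z in (Set.univ : Set X) ×ˢ Ω, f z.2 ∂(ν ⊗ₘ κ) = ∫⁻ x in Ω, f x ∂ν := by
      have hmeasset : MeasurableSet ((Set.univ : Set X) ×ˢ Ω) :=
        MeasurableSet.univ.prod hΩ
      have hindmeas : Measurable (fun z : X × X =>
          ((Set.univ : Set X) ×ˢ Ω).indicator (fun z => f z.2) z) :=
        hf2meas.indicator hmeasset
      have h2 := lintegral_map (μ := ν ⊗ₘ κ) (g := Prod.swap) hindmeas measurable_swap
      rw [hrev] at h2
      have h3 : ∀ z : X × X, ((Set.univ : Set X) ×ˢ Ω).indicator (fun z => f z.2)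
          (Prod.swap z) = (Ω ×ˢ (Set.univ : Set X)).indicator (fun z => f z.1) z := by
        rintro ⟨x, y⟩
        by_cases hx : x ∈ Ω <;> simp [Set.indicator, hx]
      have h4 := Measure.setLIntegral_compProd (μ := ν) (κ := κ)
        hf1meas hΩ (MeasurableSet.univ : MeasurableSet (Set.univ : Set X))
      calc ∫⁻ z in (Set.univ : Set X) ×ˢ Ω, f z.2 ∂(ν ⊗ₘ κ)
          = ∫⁻ z, ((Set.univ : Set X) ×ˢ Ω).indicator (fun z => f z.2) z ∂(ν ⊗ₘ κ) := by
            rw [lintegral_indicator hmeasset]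
        _ = ∫⁻ z, ((Set.univ : Set X) ×ˢ Ω).indicator (fun z => f z.2) (Prod.swap z)
              ∂(ν ⊗ₘ κ) := h2
        _ = ∫⁻ z, (Ω ×ˢ (Set.univ : Set X)).indicator (fun z => f z.1) z ∂(ν ⊗ₘ κ) := by
            simp_rw [h3]
        _ = ∫⁻ z in Ω ×ˢ (Set.univ : Set X), f z.1 ∂(ν ⊗ₘ κ) := by
            rw [lintegral_indicator (hΩ.prod MeasurableSet.univ)]
        _ = ∫⁻ x in Ω, ∫⁻ _ in (Set.univ : Set X), f x ∂(κ x) ∂ν := h4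
        _ = ∫⁻ x in Ω, f x ∂ν := by
            refine setLIntegral_congr_fun hΩ (fun x _ => ?_)
            simp [measure_univ]
    exact (hle.trans_lt (hswap ▸ huL.lt_top)).ne
  -- combine
  rw [hLHS]
  calc ∫⁻ z in (mBoundary κ Ω) ×ˢ Ω, f z.1 ∂(ν ⊗ₘ κ)
      ≤ ∫⁻ z in (mBoundary κ Ω) ×ˢ Ω,
          C * (ENNReal.ofReal (|u z.2 - u z.1| ^ q) + f z.2) ∂(ν ⊗ₘ κ) :=
        lintegral_mono fun z => key z.1 z.2
    _ = C * ((∫⁻ z in (mBoundary κ Ω) ×ˢ Ω, ENNReal.ofReal (|u z.2 - u z.1| ^ q) ∂(ν ⊗ₘ κ))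
          + ∫⁻ z in (mBoundary κ Ω) ×ˢ Ω, f z.2 ∂(ν ⊗ₘ κ)) := by
        rw [lintegral_const_mul (f := fun z : X × X => ENNReal.ofReal (|u z.2 - u z.1| ^ q) + f z.2)
          _ (gmeas.add hf2meas), lintegral_add_left gmeas]
    _ < ⊤ := ENNReal.mul_lt_top hCne.lt_top
        (ENNReal.add_lt_top.2 ⟨hA.lt_top, hB.lt_top⟩)
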